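/- Let A, B be bounded Hermitian operators. Then for all t ≥ 0: ‖[A, e^{-it(A+B)}]‖ ≥ t‖[A,B]‖ - (t²/2)‖[A+B,[A,B]]‖ in operator norm. -/

import Mathlib

open Complex

set_option synthInstance.maxHeartbeats 1000000
set_option maxHeartbeats 4000000

/-- `‖[A, e^{-it(A+B)}]‖ ≥ t‖[A,B]‖ - (t²/2)‖[A+B,[A,B]]‖` for all `t ≥ 0`. -/
theorem stmt8 {E : Type*} [NormedAddCommGroup E] [InnerProductSpace ℂ E] [CompleteSpace E]
    (A B : E →L[ℂ] E) (hA : IsSelfAdjoint A) (hB : IsSelfAdjoint B)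
    (t : ℝ) (ht : 0 ≤ t) :
    t * ‖A * B - B * A‖
        - t ^ 2 / 2 * ‖(A + B) * (A * B - B * A) - (A * B - B * A) * (A + B)‖
      ≤ ‖A * NormedSpace.exp ((-(Complex.I * t)) • (A + B))
          - NormedSpace.exp ((-(Complex.I * t)) • (A + B)) * A‖ := by
  letI : NormedAlgebra ℚ (E →L[ℂ] E) := .restrictScalars ℚ ℂ _
  set H : E →L[ℂ] E := A + B with hHdef
  have hHsa : IsSelfAdjoint H := hA.add hB
  set W : E →L[ℂ] E := (-Complex.I) • H with hWdef
  have hWstar : star W = -W := by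
    rw [hWdef, star_smul, hHsa.star_eq]
    simp [neg_smul, Complex.conj_I]
  set U : ℝ → (E →L[ℂ] E) := fun s => NormedSpace.exp (s • W) with hUdef
  set V : ℝ → (E →L[ℂ] E) := fun s => NormedSpace.exp (s • (-W)) with hVdef
  have hUmem : ∀ s : ℝ, U s ∈ unitary (E →L[ℂ] E) := by
    intro s
    apply NormedSpace.exp_mem_unitary_of_mem_skewAdjoint
    rw [skewAdjoint.mem_iff, star_smul, hWstar]
    simp
  have hVmem : ∀ s : ℝ, V s ∈ unitary (E →L[ℂ] E) := by
    intro s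
    apply NormedSpace.exp_mem_unitary_of_mem_skewAdjoint
    rw [skewAdjoint.mem_iff, star_smul, star_neg, hWstar]
    simp
  have hVU : ∀ s : ℝ, V s * U s = 1 := by
    intro s
    rw [hVdef, hUdef]
    rw [← NormedSpace.exp_add_of_commute ((((Commute.refl W).neg_left).smul_left s).smul_right s)]
    simp
  -- commutation of W with U s
  have hcommW : ∀ s : ℝ, U s * W = W * U s := by
    intro s
    exact (((Commute.refl W).smul_right s).exp_right).symm.eq
  -- derivatives
  have hUd : ∀ s : ℝ, HasDerivAt U (U s * W) s := fun s => hasDerivAt_exp_smul_const W s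
  have hVd : ∀ s : ℝ, HasDerivAt V (V s * (-W)) s := fun s => hasDerivAt_exp_smul_const (-W) s
  -- conjugation derivative
  have hconj : ∀ (X : E →L[ℂ] E) (s : ℝ),
      HasDerivAt (fun s => V s * (X * U s)) (V s * ((X * W - W * X) * U s)) s := by
    intro X s
    have h1 := (hVd s).mul ((hUd s).const_mul X)
    refine h1.congr_deriv ?_
    rw [hcommW s]
    noncomm_ring
  -- norm invariance
  have hnorm : ∀ (X : E →L[ℂ] E) (s : ℝ), ‖V s * (X * U s)‖ = ‖X‖ := by
    intro X s
    rw [CStarRing.norm_mem_unitary_mul _ (hVmem s), CStarRing.norm_mul_mem_unitary _ (hUmem s)]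
  -- commutators
  set C1 : E →L[ℂ] E := A * B - B * A with hC1def
  have hC : A * W - W * A = (-Complex.I) • C1 := by
    rw [hWdef, mul_smul_comm, smul_mul_assoc, ← smul_sub]
    congr 1
    rw [hHdef, hC1def]
    noncomm_ring
  set C : E →L[ℂ] E := (-Complex.I) • C1 with hCdef
  have hC2 : C * W - W * C = H * C1 - C1 * H := by
    rw [hCdef, hWdef]
    rw [smul_mul_assoc, mul_smul_comm, smul_smul, smul_mul_assoc, mul_smul_comm, smul_smul]
    simp [Complex.I_mul_I, ← smul_sub]
    module
  set K : ℝ := ‖H * C1 - C1 * H‖ with hKdef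
  set h : ℝ → (E →L[ℂ] E) := fun s => V s * (C * U s) with hhdef
  set g : ℝ → (E →L[ℂ] E) := fun s => V s * (A * U s) with hgdef
  have hU0 : U 0 = 1 := by simp [hUdef]
  have hV0 : V 0 = 1 := by simp [hVdef]
  have hh0 : h 0 = C := by simp [hhdef, hU0, hV0]
  have hg0 : g 0 = A := by simp [hgdef, hU0, hV0]
  have hhd : ∀ s : ℝ, HasDerivAt h (V s * ((C * W - W * C) * U s)) s := fun s => hconj C s
  have hgd : ∀ s : ℝ, HasDerivAt g (h s) s := by
    intro s
    have := hconj A s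
    rwa [hC] at this
  -- Lipschitz bound on h
  have hLip : ∀ s ∈ Set.Icc (0:ℝ) t, ‖h s - C‖ ≤ K * s := by
    intro s hs
    have := (convex_Icc (0:ℝ) t).norm_image_sub_le_of_norm_hasDerivWithin_le
      (f := h) (f' := fun s => V s * ((C * W - W * C) * U s)) (C := K)
      (fun x _ => (hhd x).hasDerivWithinAt)
      (fun x _ => le_of_eq (by rw [hnorm, hC2]))
      (Set.left_mem_Icc.mpr ht) hs
    rw [hh0] at this
    simpa [_root_.abs_of_nonneg hs.1] using this
  -- continuity of h
  have hhcont : Continuous h := by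
    rw [continuous_iff_continuousAt]
    exact fun s => (hhd s).continuousAt
  -- FTC
  have hFTC : ∫ s in (0:ℝ)..t, (h s - C) = (g t - t • C) - g 0 := by
    have := intervalIntegral.integral_eq_sub_of_hasDerivAt
      (f := fun s => g s - s • C) (f' := fun s => h s - C)
      (a := 0) (b := t)
      (fun x _ => by exact ((hgd x).sub ((hasDerivAt_id x).smul_const C)).congr_deriv (by simp))
      ((hhcont.sub continuous_const).intervalIntegrable 0 t)
    rw [this]
    simp
  -- bound the integral
  have hbound : ‖g t - t • C - g 0‖ ≤ K * (t ^ 2 / 2) := by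
    rw [← hFTC]
    have h1 : ‖∫ s in (0:ℝ)..t, (h s - C)‖ ≤ |∫ s in (0:ℝ)..t, K * s| := by
      refine le_trans ?_ (le_abs_self _)
      apply intervalIntegral.norm_integral_le_of_norm_le ht
      · filter_upwards with s hs
        have hs' : s ∈ Set.Icc (0:ℝ) t := by
          exact ⟨le_of_lt hs.1, hs.2⟩
        exact hLip s hs'
      · exact (continuous_const.mul continuous_id).intervalIntegrable 0 t
    have h2 : (∫ s in (0:ℝ)..t, K * s) = K * (t ^ 2 / 2) := by
      rw [intervalIntegral.integral_const_mul, integral_id]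
      ring
    rw [h2] at h1
    calc ‖∫ s in (0:ℝ)..t, (h s - C)‖ ≤ |K * (t ^ 2 / 2)| := h1
      _ = K * (t ^ 2 / 2) := abs_of_nonneg (by positivity)
  -- norm of g t - g 0
  have hgt : ‖g t - g 0‖ = ‖A * U t - U t * A‖ := by
    have hAid : V t * (U t * A) = A := by rw [← mul_assoc, hVU t, one_mul]
    have hdiff : g t - g 0 = V t * (A * U t - U t * A) := by
      rw [hg0]
      show V t * (A * U t) - A = _
      rw [mul_sub, hAid]
    rw [hdiff, CStarRing.norm_mem_unitary_mul _ (hVmem t)]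
  -- norm of t • C
  have htC : ‖t • C‖ = t * ‖C1‖ := by
    rw [norm_smul, Real.norm_eq_abs, _root_.abs_of_nonneg ht, hCdef, norm_smul]
    simp
  -- exponential identification
  have hexp : NormedSpace.exp ((-(Complex.I * t)) • H) = U t := by
    rw [hUdef]
    congr 1
    rw [hWdef, smul_comm, ← Complex.coe_smul, smul_smul]
    ring_nf
  rw [hexp]
  have key : t * ‖C1‖ ≤ ‖A * U t - U t * A‖ + K * (t ^ 2 / 2) := by
    calc t * ‖C1‖ = ‖t • C‖ := htC.symm
      _ = ‖(g t - g 0) - (g t - t • C - g 0)‖ := by congr 1; abel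
      _ ≤ ‖g t - g 0‖ + ‖g t - t • C - g 0‖ := norm_sub_le _ _
      _ ≤ ‖A * U t - U t * A‖ + K * (t ^ 2 / 2) := by rw [hgt]; linarith [hbound]
  linarith [key]
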